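/- Let (D(k))_{k≥1} be an i.i.d. sequence of real-valued random variables with δ := −E[D(1)] > 0, E[D(1)²] < ∞, and P{D(1) > 0} > 0. For r > 0 and x > 0, let Φ^r be the reflected random walk started at Φ^r(0) = r·x, i.e., Φ^r(k+1) = max(Φ^r(k) + D(k+1), 0), and let τ₀^r := inf{k ≥ 1 : Φ^r(k) = 0}. Then lim_{r→∞} r⁻² E[Σ_{k=0}^{τ₀^r − 1} Φ^r(k)] = (2δ)⁻¹ x². -/

import Mathlib

set_option linter.unusedSectionVars false
set_option linter.unusedVariables false

open MeasureTheory ProbabilityTheory Filter Set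
open scoped ENNReal

namespace RRWProof

variable {Ω : Type*} [MeasureSpace Ω] [IsProbabilityMeasure (ℙ : Measure Ω)]

noncomputable def rwpos (D : ℕ → Ω → ℝ) (a c : ℝ) (k : ℕ) (ω : Ω) : ℝ :=
  a + k * c + ∑ i ∈ Finset.range k, D (i + 1) ω

def alv (D : ℕ → Ω → ℝ) (a c : ℝ) (S : Set ℝ) (n : ℕ) : Set Ω :=
  {ω | ∀ k ≤ n, rwpos D a c k ω ∈ S}

noncomputable def SP (D : ℕ → Ω → ℝ) (a c : ℝ) (S : Set ℝ) : ℕ → Ω → ℝ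
  | 0 => fun _ => a
  | n + 1 => fun ω =>
      SP D a c S n ω + Set.indicator (alv D a c S n) (fun ω' => D (n + 1) ω' + c) ω

variable {D : ℕ → Ω → ℝ} {a c : ℝ} {S : Set ℝ}

lemma rwpos_zero (ω : Ω) : rwpos D a c 0 ω = a := by simp [rwpos]

lemma rwpos_succ (k : ℕ) (ω : Ω) :
    rwpos D a c (k + 1) ω = rwpos D a c k ω + (D (k + 1) ω + c) := by
  simp only [rwpos, Finset.sum_range_succ]
  push_cast
  ring

lemma measurable_rwpos (hDmeas : ∀ k, Measurable (D k)) (k : ℕ) :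
    Measurable (rwpos D a c k) :=
  (measurable_const.add (Finset.measurable_sum _ fun i _ => hDmeas (i + 1)))

lemma alv_measurableSet (hDmeas : ∀ k, Measurable (D k)) (hS : MeasurableSet S) (n : ℕ) :
    MeasurableSet (alv D a c S n) := by
  have : alv D a c S n = ⋂ (k : ℕ) (_ : k ≤ n), rwpos D a c k ⁻¹' S := by
    ext ω; simp [alv, Set.mem_iInter]
  rw [this]
  exact MeasurableSet.iInter fun k => MeasurableSet.iInter fun _ =>
    (measurable_rwpos hDmeas k) hS

lemma alv_antitone {m n : ℕ} (h : m ≤ n) : alv D a c S n ⊆ alv D a c S m :=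
  fun ω hω k hk => hω k (hk.trans h)

lemma SP_eq_rwpos {n : ℕ} {ω : Ω} (hω : ω ∈ alv D a c S n) :
    SP D a c S n ω = rwpos D a c n ω := by
  induction n with
  | zero => simp [SP, rwpos]
  | succ n ih =>
    have hn : ω ∈ alv D a c S n := alv_antitone (Nat.le_succ n) hω
    simp only [SP, Set.indicator_of_mem hn, ih hn, rwpos_succ]

lemma SP_frozen {n m : ℕ} {ω : Ω} (hω : ω ∉ alv D a c S n) (h : n ≤ m) :
    SP D a c S m ω = SP D a c S n ω := by
  induction m with
  | zero =>
    have : n = 0 := Nat.le_zero.mp h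
    subst this; rfl
  | succ m ih =>
    rcases Nat.lt_or_ge n (m+1) with hlt | hge
    · have hnm : n ≤ m := by omega
      have : ω ∉ alv D a c S m := fun hmem => hω (alv_antitone hnm hmem)
      simp [SP, Set.indicator_of_notMem this, ih hnm]
    · have : n = m + 1 := le_antisymm h hge
      subst this; rfl

lemma SP_dead (h0 : a ∈ S) {n : ℕ} {ω : Ω} (hn : ω ∉ alv D a c S n) :
    ∃ k, 1 ≤ k ∧ k ≤ n ∧ ω ∈ alv D a c S (k - 1) ∧ rwpos D a c k ω ∉ S ∧
      SP D a c S n ω = rwpos D a c k ω := by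
  classical
  have hex : ∃ k, k ≤ n ∧ rwpos D a c k ω ∉ S := by
    by_contra h
    push_neg at h
    exact hn fun k hk => h k hk
  let P : ℕ → Prop := fun k => rwpos D a c k ω ∉ S
  have hexP : ∃ k, P k := ⟨hex.choose, hex.choose_spec.2⟩
  set k0 := Nat.find hexP with hk0
  have hPk0 : rwpos D a c k0 ω ∉ S := Nat.find_spec hexP
  have hk0n : k0 ≤ n := by
    obtain ⟨k, hk, hPk⟩ := hex
    exact (Nat.find_min' hexP hPk).trans hk
  have hk01 : 1 ≤ k0 := by
    rcases Nat.eq_zero_or_pos k0 with h | h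
    · rw [h] at hPk0
      exact absurd (by simpa [rwpos_zero] using hPk0) (by simp [h0])
    · exact h
  have halv : ω ∈ alv D a c S (k0 - 1) := by
    intro k hk
    by_contra hk'
    have := Nat.find_min' hexP hk'
    omega
  refine ⟨k0, hk01, hk0n, halv, hPk0, ?_⟩
  have key : ∀ m, k0 ≤ m → SP D a c S m ω = rwpos D a c k0 ω := by
    intro m hm
    have hdead : ω ∉ alv D a c S k0 := fun hmem => hPk0 (hmem k0 le_rfl)
    have hSPk0 : SP D a c S k0 ω = rwpos D a c k0 ω := by
      obtain ⟨k1, hk1⟩ : ∃ k1, k0 = k1 + 1 := ⟨k0 - 1, by omega⟩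
      have hk1' : ω ∈ alv D a c S k1 := by
        have h12 : k1 = k0 - 1 := by omega
        rw [h12]; exact halv
      rw [hk1]
      show SP D a c S k1 ω + Set.indicator (alv D a c S k1) (fun ω' => D (k1 + 1) ω' + c) ω = _
      rw [Set.indicator_of_mem hk1', SP_eq_rwpos hk1', rwpos_succ]
    calc SP D a c S m ω = SP D a c S k0 ω := SP_frozen hdead hm
    _ = _ := hSPk0
  exact key n hk0n


/-! ### Independence layer -/

noncomputable def trunc (D : ℕ → Ω → ℝ) (n : ℕ) (ω : Ω) : ℕ → ℝ :=
  fun i => if i ∈ Finset.range (n + 1) then D i ω else 0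

lemma indep_rep (hiid : iIndepFun D ℙ)
    (hDmeas : ∀ k, Measurable (D k)) (n : ℕ)
    {F : Ω → ℝ} (hF : ∃ φ : (ℕ → ℝ) → ℝ, Measurable φ ∧ F = fun ω => φ (trunc D n ω))
    (ψ : ℝ → ℝ) (hψ : Measurable ψ) :
    IndepFun F (fun ω => ψ (D (n + 1) ω)) ℙ := by
  classical
  obtain ⟨φ, hφ, rfl⟩ := hF
  have hdisj : Disjoint (Finset.range (n + 1)) ({n + 1} : Finset ℕ) := by
    simp only [Finset.disjoint_left, Finset.mem_range, Finset.mem_singleton]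
    omega
  have h := hiid.indepFun_finset (Finset.range (n + 1)) {n + 1} hdisj hDmeas
  have hext : Measurable (fun (v : ((Finset.range (n + 1) : Finset ℕ) : Type) → ℝ) =>
      (fun i : ℕ => if h : i ∈ Finset.range (n + 1) then v ⟨i, h⟩ else 0)) := by
    apply measurable_pi_lambda
    intro i
    by_cases hi : i ∈ Finset.range (n + 1)
    · simpa [hi] using measurable_pi_apply (⟨i, hi⟩ : (Finset.range (n + 1) : Finset ℕ))
    · simpa [hi] using measurable_const
  have hev : Measurable (fun (v : (({n + 1} : Finset ℕ) : Type) → ℝ) =>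
      v ⟨n + 1, Finset.mem_singleton_self _⟩) := measurable_pi_apply _
  have hcomp := h.comp (hφ.comp hext) (hψ.comp hev)
  convert hcomp using 2 <;> rfl

noncomputable def posF (a c : ℝ) (k : ℕ) (u : ℕ → ℝ) : ℝ :=
  a + k * c + ∑ i ∈ Finset.range k, u (i + 1)

def alvF (a c : ℝ) (S : Set ℝ) (n : ℕ) : Set (ℕ → ℝ) :=
  {u | ∀ k ≤ n, posF a c k u ∈ S}

lemma measurable_posF {a c : ℝ} (k : ℕ) : Measurable (posF a c k) :=
  measurable_const.add (Finset.measurable_sum _ fun i _ => measurable_pi_apply (i + 1))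

lemma measurableSet_alvF {a c : ℝ} (hS : MeasurableSet S) (n : ℕ) :
    MeasurableSet (alvF a c S n) := by
  have : alvF a c S n = ⋂ (k : ℕ) (_ : k ≤ n), posF a c k ⁻¹' S := by
    ext u; simp [alvF, Set.mem_iInter]
  rw [this]
  exact MeasurableSet.iInter fun k => MeasurableSet.iInter fun _ => (measurable_posF k) hS

lemma posF_trunc {k n : ℕ} (hk : k ≤ n) (ω : Ω) :
    posF a c k (trunc D n ω) = rwpos D a c k ω := by
  unfold posF rwpos trunc
  congr 1
  apply Finset.sum_congr rfl
  intro i hi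
  have : i + 1 ∈ Finset.range (n + 1) := by
    simp only [Finset.mem_range] at hi ⊢; omega
  simp [this]

lemma trunc_mem_alvF {n : ℕ} (ω : Ω) :
    trunc D n ω ∈ alvF a c S n ↔ ω ∈ alv D a c S n := by
  unfold alvF alv
  constructor <;> intro h k hk
  · have := h k hk; rwa [posF_trunc hk] at this
  · rw [posF_trunc hk]; exact h k hk

lemma rep_one (n : ℕ) :
    (Set.indicator (alv D a c S n) (fun _ => (1 : ℝ))) =
      fun ω => (Set.indicator (alvF a c S n) (fun _ => (1 : ℝ))) (trunc D n ω) := by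
  funext ω
  by_cases h : ω ∈ alv D a c S n
  · rw [Set.indicator_of_mem h, Set.indicator_of_mem ((trunc_mem_alvF ω).mpr h)]
  · rw [Set.indicator_of_notMem h,
      Set.indicator_of_notMem (fun hh => h ((trunc_mem_alvF ω).mp hh))]

lemma rep_pos (n : ℕ) :
    (Set.indicator (alv D a c S n) (rwpos D a c n)) =
      fun ω => (Set.indicator (alvF a c S n) (posF a c n)) (trunc D n ω) := by
  funext ω
  by_cases h : ω ∈ alv D a c S n
  · rw [Set.indicator_of_mem h, Set.indicator_of_mem ((trunc_mem_alvF ω).mpr h),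
      posF_trunc le_rfl]
  · rw [Set.indicator_of_notMem h,
      Set.indicator_of_notMem (fun hh => h ((trunc_mem_alvF ω).mp hh))]

lemma indep_one (hiid : iIndepFun D ℙ)
    (hDmeas : ∀ k, Measurable (D k)) (hS : MeasurableSet S) (n : ℕ)
    (ψ : ℝ → ℝ) (hψ : Measurable ψ) :
    IndepFun (Set.indicator (alv D a c S n) (fun _ => (1 : ℝ)))
      (fun ω => ψ (D (n + 1) ω)) ℙ :=
  indep_rep hiid hDmeas n
    ⟨Set.indicator (alvF a c S n) (fun _ => (1 : ℝ)),
      (measurable_const.indicator (measurableSet_alvF hS n)), rep_one n⟩ ψ hψ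

lemma indep_pos (hiid : iIndepFun D ℙ)
    (hDmeas : ∀ k, Measurable (D k)) (hS : MeasurableSet S) (n : ℕ)
    (ψ : ℝ → ℝ) (hψ : Measurable ψ) :
    IndepFun (Set.indicator (alv D a c S n) (rwpos D a c n))
      (fun ω => ψ (D (n + 1) ω)) ℙ :=
  indep_rep hiid hDmeas n
    ⟨Set.indicator (alvF a c S n) (posF a c n),
      ((measurable_posF n).indicator (measurableSet_alvF hS n)), rep_pos n⟩ ψ hψ


/-! ### Moments and integrability -/

lemma memLp_D (hDmeas : ∀ k, Measurable (D k))
    (hident : ∀ k, IdentDistrib (D k) (D 1) ℙ ℙ)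
    (hDsq : Integrable (fun ω => (D 1 ω) ^ 2)) (k : ℕ) :
    MemLp (D k) 2 ℙ :=
  ((hident k).memLp_iff).mpr
    ((memLp_two_iff_integrable_sq (hDmeas 1).aestronglyMeasurable).mpr hDsq)

lemma int_D (hident : ∀ k, IdentDistrib (D k) (D 1) ℙ ℙ)
    (hDint : Integrable (D 1)) (k : ℕ) : Integrable (D k) :=
  ((hident k).integrable_iff).mpr hDint

lemma memLp_Dc (hDmeas : ∀ k, Measurable (D k))
    (hident : ∀ k, IdentDistrib (D k) (D 1) ℙ ℙ)
    (hDsq : Integrable (fun ω => (D 1 ω) ^ 2)) (k : ℕ) (c : ℝ) :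
    MemLp (fun ω => D k ω + c) 2 ℙ :=
  (memLp_D hDmeas hident hDsq k).add (memLp_const c)

lemma memLp_SP (hDmeas : ∀ k, Measurable (D k))
    (hident : ∀ k, IdentDistrib (D k) (D 1) ℙ ℙ)
    (hDsq : Integrable (fun ω => (D 1 ω) ^ 2)) (hS : MeasurableSet S) (n : ℕ) :
    MemLp (SP D a c S n) 2 ℙ := by
  induction n with
  | zero => exact memLp_const a
  | succ n ih =>
    exact ih.add (((memLp_Dc hDmeas hident hDsq (n + 1) c)).indicator
      (alv_measurableSet hDmeas hS n))

lemma memLp_ind_pos (hDmeas : ∀ k, Measurable (D k))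
    (hident : ∀ k, IdentDistrib (D k) (D 1) ℙ ℙ)
    (hDsq : Integrable (fun ω => (D 1 ω) ^ 2)) (hS : MeasurableSet S) (n : ℕ) :
    MemLp (Set.indicator (alv D a c S n) (rwpos D a c n)) 2 ℙ := by
  refine MemLp.indicator (alv_measurableSet hDmeas hS n) ?_
  refine MemLp.add (memLp_const _) ?_
  have := memLp_finset_sum' (μ := (ℙ : Measure Ω)) (p := 2) (Finset.range n)
    (fun i _ => memLp_D hDmeas hident hDsq (i + 1))
  rw [show (fun ω => ∑ i ∈ Finset.range n, D (i + 1) ω)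
      = ∑ i ∈ Finset.range n, D (i + 1) from funext fun ω => by simp]
  exact this

/-! ### Expectation recursions -/

noncomputable def pAlv (D : ℕ → Ω → ℝ) (a c : ℝ) (S : Set ℝ) (n : ℕ) : ℝ :=
  (ℙ (alv D a c S n)).toReal

noncomputable def eAlv (D : ℕ → Ω → ℝ) (a c : ℝ) (S : Set ℝ) (n : ℕ) : ℝ :=
  ∫ ω, Set.indicator (alv D a c S n) (rwpos D a c n) ω

lemma integral_ind_mul_one (hiid : iIndepFun D ℙ)
    (hDmeas : ∀ k, Measurable (D k)) (hS : MeasurableSet S) (n : ℕ)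
    (ψ : ℝ → ℝ) (hψ : Measurable ψ) (hψi : Integrable (fun ω => ψ (D (n + 1) ω))) :
    Integrable (fun ω => Set.indicator (alv D a c S n) (fun _ => (1:ℝ)) ω * ψ (D (n + 1) ω)) ∧
    (∫ ω, Set.indicator (alv D a c S n) (fun _ => (1:ℝ)) ω * ψ (D (n + 1) ω))
      = pAlv D a c S n * ∫ ω, ψ (D (n + 1) ω) := by
  have hind := indep_one (a := a) (c := c) hiid hDmeas hS n ψ hψ
  have h1 : Integrable (Set.indicator (alv D a c S n) (fun _ => (1:ℝ))) :=
    (integrable_const (1:ℝ)).indicator (alv_measurableSet hDmeas hS n)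
  refine ⟨hind.integrable_mul h1 hψi, ?_⟩
  have := hind.integral_mul_eq_mul_integral h1.aestronglyMeasurable hψi.aestronglyMeasurable
  have h2 : ∫ ω, Set.indicator (alv D a c S n) (fun _ => (1:ℝ)) ω = pAlv D a c S n := by
    rw [integral_indicator_const (1:ℝ) (alv_measurableSet hDmeas hS n)]
    simp [pAlv, measureReal_def]
  simpa [Pi.mul_apply, h2] using this

lemma integral_ind_mul_pos (hiid : iIndepFun D ℙ)
    (hDmeas : ∀ k, Measurable (D k))
    (hident : ∀ k, IdentDistrib (D k) (D 1) ℙ ℙ)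
    (hDsq : Integrable (fun ω => (D 1 ω) ^ 2))
    (hS : MeasurableSet S) (n : ℕ)
    (ψ : ℝ → ℝ) (hψ : Measurable ψ) (hψi : Integrable (fun ω => ψ (D (n + 1) ω))) :
    Integrable (fun ω => Set.indicator (alv D a c S n) (rwpos D a c n) ω * ψ (D (n + 1) ω)) ∧
    (∫ ω, Set.indicator (alv D a c S n) (rwpos D a c n) ω * ψ (D (n + 1) ω))
      = eAlv D a c S n * ∫ ω, ψ (D (n + 1) ω) := by
  have hind := indep_pos (a := a) (c := c) hiid hDmeas hS n ψ hψ
  have h1 : Integrable (Set.indicator (alv D a c S n) (rwpos D a c n)) :=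
    (memLp_ind_pos hDmeas hident hDsq hS n).integrable one_le_two
  refine ⟨hind.integrable_mul h1 hψi, ?_⟩
  have := hind.integral_mul_eq_mul_integral h1.aestronglyMeasurable hψi.aestronglyMeasurable
  simpa [Pi.mul_apply, eAlv] using this


lemma integral_Dc (hident : ∀ k, IdentDistrib (D k) (D 1) ℙ ℙ)
    (hDint : Integrable (D 1)) (n : ℕ) (c : ℝ) :
    ∫ ω, (D (n + 1) ω + c) = (∫ ω, D 1 ω) + c := by
  rw [integral_add (int_D hident hDint (n + 1)) (integrable_const c), integral_const,
    (hident (n + 1)).integral_eq]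
  simp

lemma integral_Dc_sq (hident : ∀ k, IdentDistrib (D k) (D 1) ℙ ℙ) (n : ℕ) (c : ℝ) :
    ∫ ω, (D (n + 1) ω + c) ^ 2 = ∫ ω, (D 1 ω + c) ^ 2 :=
  ((hident (n + 1)).comp (by fun_prop : Measurable (fun y : ℝ => (y + c) ^ 2))).integral_eq

lemma integral_SP_succ (hiid : iIndepFun D ℙ)
    (hDmeas : ∀ k, Measurable (D k))
    (hident : ∀ k, IdentDistrib (D k) (D 1) ℙ ℙ)
    (hDint : Integrable (D 1))
    (hDsq : Integrable (fun ω => (D 1 ω) ^ 2))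
    (hS : MeasurableSet S) (n : ℕ) :
    ∫ ω, SP D a c S (n + 1) ω
      = (∫ ω, SP D a c S n ω) + pAlv D a c S n * ((∫ ω, D 1 ω) + c) := by
  have hint1 : Integrable (SP D a c S n) :=
    (memLp_SP hDmeas hident hDsq hS n).integrable one_le_two
  have hψi : Integrable (fun ω => D (n + 1) ω + c) :=
    (int_D hident hDint (n + 1)).add (integrable_const c)
  have hprod := integral_ind_mul_one (a := a) (c := c) hiid hDmeas hS n
    (fun y => y + c) (by fun_prop) hψi
  have hindint : Integrable (Set.indicator (alv D a c S n) (fun ω' => D (n + 1) ω' + c)) :=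
    ((memLp_Dc hDmeas hident hDsq (n + 1) c).indicator
      (alv_measurableSet hDmeas hS n)).integrable one_le_two
  have heq : (fun ω => Set.indicator (alv D a c S n) (fun ω' => D (n + 1) ω' + c) ω)
      = fun ω => Set.indicator (alv D a c S n) (fun _ => (1:ℝ)) ω * (D (n + 1) ω + c) := by
    funext ω
    by_cases h : ω ∈ alv D a c S n <;> simp [h]
  show ∫ ω, (SP D a c S n ω + Set.indicator (alv D a c S n) (fun ω' => D (n + 1) ω' + c) ω) = _
  rw [integral_add hint1 hindint]
  congr 1
  rw [show (∫ ω, Set.indicator (alv D a c S n) (fun ω' => D (n + 1) ω' + c) ω)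
      = ∫ ω, Set.indicator (alv D a c S n) (fun _ => (1:ℝ)) ω * (D (n + 1) ω + c) from by
    rw [heq]]
  rw [hprod.2, integral_Dc hident hDint n c]

lemma integral_SP_sq_succ (hiid : iIndepFun D ℙ)
    (hDmeas : ∀ k, Measurable (D k))
    (hident : ∀ k, IdentDistrib (D k) (D 1) ℙ ℙ)
    (hDint : Integrable (D 1))
    (hDsq : Integrable (fun ω => (D 1 ω) ^ 2))
    (hS : MeasurableSet S) (n : ℕ) :
    ∫ ω, (SP D a c S (n + 1) ω) ^ 2
      = (∫ ω, (SP D a c S n ω) ^ 2) + 2 * ((∫ ω, D 1 ω) + c) * eAlv D a c S n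
        + (∫ ω, (D 1 ω + c) ^ 2) * pAlv D a c S n := by
  have hψ1i : Integrable (fun ω => D (n + 1) ω + c) :=
    (int_D hident hDint (n + 1)).add (integrable_const c)
  have hψ2i : Integrable (fun ω => (D (n + 1) ω + c) ^ 2) :=
    (memLp_Dc hDmeas hident hDsq (n + 1) c).integrable_sq
  have hcross := integral_ind_mul_pos (a := a) (c := c) hiid hDmeas hident hDsq hS n
    (fun y => y + c) (by fun_prop) hψ1i
  have hsq := integral_ind_mul_one (a := a) (c := c) hiid hDmeas hS n
    (fun y => (y + c) ^ 2) (by fun_prop) hψ2i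
  have hSPsq : Integrable (fun ω => (SP D a c S n ω) ^ 2) :=
    (memLp_SP hDmeas hident hDsq hS n).integrable_sq
  have hkey : (fun ω => (SP D a c S (n + 1) ω) ^ 2)
      = fun ω => (SP D a c S n ω) ^ 2
        + (2 * (Set.indicator (alv D a c S n) (rwpos D a c n) ω * (D (n + 1) ω + c))
          + Set.indicator (alv D a c S n) (fun _ => (1:ℝ)) ω * ((D (n + 1) ω + c) ^ 2)) := by
    funext ω
    have hSP : SP D a c S (n + 1) ω = SP D a c S n ω
        + Set.indicator (alv D a c S n) (fun ω' => D (n + 1) ω' + c) ω := rfl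
    by_cases h : ω ∈ alv D a c S n
    · rw [hSP, Set.indicator_of_mem h, Set.indicator_of_mem h, Set.indicator_of_mem h,
        SP_eq_rwpos h]
      ring
    · rw [hSP, Set.indicator_of_notMem h, Set.indicator_of_notMem h,
        Set.indicator_of_notMem h]
      ring
  have hc1 : Integrable (fun ω =>
      Set.indicator (alv D a c S n) (rwpos D a c n) ω * (D (n + 1) ω + c)) := hcross.1
  have hc2 : (∫ ω, Set.indicator (alv D a c S n) (rwpos D a c n) ω * (D (n + 1) ω + c))
      = eAlv D a c S n * ∫ ω, (D (n + 1) ω + c) := hcross.2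
  have hs1 : Integrable (fun ω =>
      Set.indicator (alv D a c S n) (fun _ => (1:ℝ)) ω * (D (n + 1) ω + c) ^ 2) := hsq.1
  have hs2 : (∫ ω, Set.indicator (alv D a c S n) (fun _ => (1:ℝ)) ω * (D (n + 1) ω + c) ^ 2)
      = pAlv D a c S n * ∫ ω, (D (n + 1) ω + c) ^ 2 := hsq.2
  have hc1' : Integrable (fun ω =>
      2 * (Set.indicator (alv D a c S n) (rwpos D a c n) ω * (D (n + 1) ω + c))) :=
    hc1.const_mul 2
  have h2 : Integrable (fun ω =>
      2 * (Set.indicator (alv D a c S n) (rwpos D a c n) ω * (D (n + 1) ω + c))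
        + Set.indicator (alv D a c S n) (fun _ => (1:ℝ)) ω * (D (n + 1) ω + c) ^ 2) :=
    hc1'.add hs1
  rw [hkey, integral_add hSPsq h2, integral_add hc1' hs1, integral_const_mul 2 _, hc2, hs2,
    integral_Dc hident hDint n c, integral_Dc_sq hident n c]
  ring

lemma integral_SP_closed (hiid : iIndepFun D ℙ)
    (hDmeas : ∀ k, Measurable (D k))
    (hident : ∀ k, IdentDistrib (D k) (D 1) ℙ ℙ)
    (hDint : Integrable (D 1))
    (hDsq : Integrable (fun ω => (D 1 ω) ^ 2))
    (hS : MeasurableSet S) (n : ℕ) :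
    ∫ ω, SP D a c S n ω
      = a + ((∫ ω, D 1 ω) + c) * ∑ k ∈ Finset.range n, pAlv D a c S k := by
  induction n with
  | zero => simp [SP]
  | succ n ih =>
    rw [integral_SP_succ hiid hDmeas hident hDint hDsq hS n, ih, Finset.sum_range_succ]
    ring

lemma integral_SP_sq_closed (hiid : iIndepFun D ℙ)
    (hDmeas : ∀ k, Measurable (D k))
    (hident : ∀ k, IdentDistrib (D k) (D 1) ℙ ℙ)
    (hDint : Integrable (D 1))
    (hDsq : Integrable (fun ω => (D 1 ω) ^ 2))
    (hS : MeasurableSet S) (n : ℕ) :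
    ∫ ω, (SP D a c S n ω) ^ 2
      = a ^ 2 + 2 * ((∫ ω, D 1 ω) + c) * ∑ k ∈ Finset.range n, eAlv D a c S k
        + (∫ ω, (D 1 ω + c) ^ 2) * ∑ k ∈ Finset.range n, pAlv D a c S k := by
  induction n with
  | zero => simp [SP]
  | succ n ih =>
    rw [integral_SP_sq_succ hiid hDmeas hident hDint hDsq hS n, ih,
      Finset.sum_range_succ, Finset.sum_range_succ]
    ring


lemma measurable_SP (hDmeas : ∀ k, Measurable (D k)) (hS : MeasurableSet S) (n : ℕ) :
    Measurable (SP D a c S n) := by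
  induction n with
  | zero => exact measurable_const
  | succ n ih =>
    exact ih.add (((hDmeas (n + 1)).add measurable_const).indicator
      (alv_measurableSet hDmeas hS n))

lemma pAlv_le_one (n : ℕ) : pAlv D a c S n ≤ 1 := by
  unfold pAlv
  exact ENNReal.toReal_le_of_le_ofReal zero_le_one (by simpa using prob_le_one)

lemma pAlv_nonneg (n : ℕ) : 0 ≤ pAlv D a c S n := ENNReal.toReal_nonneg

/-- Closed form for mean and second moment of the free walk (S = univ). -/
lemma alv_univ (n : ℕ) : alv D a c Set.univ n = Set.univ := by
  ext ω; simp [alv]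

lemma SP_univ (n : ℕ) (ω : Ω) : SP D a c Set.univ n ω = rwpos D a c n ω :=
  SP_eq_rwpos (by rw [alv_univ]; trivial)

lemma pAlv_univ (n : ℕ) : pAlv D a c Set.univ n = 1 := by
  simp [pAlv, alv_univ]

lemma eAlv_univ (n : ℕ) : eAlv D a c Set.univ n = ∫ ω, rwpos D a c n ω := by
  unfold eAlv
  rw [alv_univ]
  simp

lemma integral_rwpos (hiid : iIndepFun D ℙ)
    (hDmeas : ∀ k, Measurable (D k))
    (hident : ∀ k, IdentDistrib (D k) (D 1) ℙ ℙ)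
    (hDint : Integrable (D 1))
    (hDsq : Integrable (fun ω => (D 1 ω) ^ 2)) (n : ℕ) :
    ∫ ω, rwpos D a c n ω = a + ((∫ ω, D 1 ω) + c) * n := by
  have h := integral_SP_closed (a := a) (c := c) (S := Set.univ) hiid hDmeas hident hDint hDsq
    MeasurableSet.univ n
  simp only [pAlv_univ, Finset.sum_const, Finset.card_range, nsmul_eq_mul, mul_one] at h
  rw [show (∫ ω, rwpos D a c n ω) = ∫ ω, SP D a c Set.univ n ω from
    integral_congr_ae (Filter.Eventually.of_forall fun ω => (SP_univ n ω).symm), h]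

lemma sum_range_cast (n : ℕ) : ∑ i ∈ Finset.range n, (i : ℝ) = n * (n - 1) / 2 := by
  induction n with
  | zero => simp
  | succ n ih =>
    rw [Finset.sum_range_succ, ih]
    push_cast
    ring

lemma integral_rwpos_sq (hiid : iIndepFun D ℙ)
    (hDmeas : ∀ k, Measurable (D k))
    (hident : ∀ k, IdentDistrib (D k) (D 1) ℙ ℙ)
    (hDint : Integrable (D 1))
    (hDsq : Integrable (fun ω => (D 1 ω) ^ 2)) (n : ℕ) :
    ∫ ω, (rwpos D a c n ω) ^ 2
      = (a + ((∫ ω, D 1 ω) + c) * n) ^ 2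
        + ((∫ ω, (D 1 ω + c) ^ 2) - ((∫ ω, D 1 ω) + c) ^ 2) * n := by
  have h := integral_SP_sq_closed (a := a) (c := c) (S := Set.univ) hiid hDmeas hident hDint hDsq
    MeasurableSet.univ n
  simp only [pAlv_univ, Finset.sum_const, Finset.card_range, nsmul_eq_mul, mul_one] at h
  have he : ∀ k, eAlv D a c Set.univ k = a + ((∫ ω, D 1 ω) + c) * k := fun k => by
    rw [eAlv_univ, integral_rwpos hiid hDmeas hident hDint hDsq]
  simp only [he] at h
  rw [Finset.sum_add_distrib, Finset.sum_const, ← Finset.mul_sum, sum_range_cast,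
    Finset.card_range] at h
  rw [show (∫ ω, (rwpos D a c n ω) ^ 2) = ∫ ω, (SP D a c Set.univ n ω) ^ 2 from
    integral_congr_ae (Filter.Eventually.of_forall fun ω => by
      show rwpos D a c n ω ^ 2 = SP D a c Set.univ n ω ^ 2
      rw [SP_univ]), h]
  push_cast
  ring

/-- Kolmogorov-type maximal inequality from the stopped second-moment identity. -/
lemma kolmogorov_bound (hiid : iIndepFun D ℙ)
    (hDmeas : ∀ k, Measurable (D k))
    (hident : ∀ k, IdentDistrib (D k) (D 1) ℙ ℙ)
    (hDint : Integrable (D 1))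
    (hDsq : Integrable (fun ω => (D 1 ω) ^ 2))
    (c lam : ℝ) (hc : (∫ ω, D 1 ω) + c = 0) (hlam : 0 < lam) (n : ℕ) :
    (ℙ ((alv D 0 c (Set.Ioi (-lam)) n)ᶜ)).toReal * lam ^ 2
      ≤ (∫ ω, (D 1 ω + c) ^ 2) * n := by
  set S : Set ℝ := Set.Ioi (-lam) with hSdef
  have hS : MeasurableSet S := measurableSet_Ioi
  have hs := integral_SP_sq_closed (a := 0) (c := c) (S := S) hiid hDmeas hident hDint hDsq hS n
  rw [hc] at hs
  simp only [mul_zero, zero_mul, zero_add, ne_eq] at hs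
  have hm2 : 0 ≤ ∫ ω, (D 1 ω + c) ^ 2 := integral_nonneg fun ω => sq_nonneg _
  have hPn : ∑ k ∈ Finset.range n, pAlv D 0 c S k ≤ n := by
    calc ∑ k ∈ Finset.range n, pAlv D 0 c S k ≤ ∑ k ∈ Finset.range n, 1 :=
          Finset.sum_le_sum fun k _ => pAlv_le_one k
    _ = n := by simp
  have h0S : (0:ℝ) ∈ S := by simp [hSdef]; linarith
  have hptw : ∀ ω, Set.indicator ((alv D 0 c S n)ᶜ) (fun _ => lam ^ 2) ω
      ≤ (SP D 0 c S n ω) ^ 2 := by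
    intro ω
    by_cases h : ω ∈ (alv D 0 c S n)ᶜ
    · obtain ⟨k0, hk01, hk0n, halv, hns, hSPn⟩ := SP_dead h0S h
      rw [Set.indicator_of_mem h, hSPn]
      have : rwpos D 0 c k0 ω ≤ -lam := by
        by_contra hcon
        exact hns (by simpa [hSdef] using lt_of_not_ge hcon)
      nlinarith
    · rw [Set.indicator_of_notMem h]; exact sq_nonneg _
  have hci : Integrable (Set.indicator ((alv D 0 c S n)ᶜ) (fun _ => lam ^ 2)) :=
    (integrable_const _).indicator (alv_measurableSet hDmeas hS n).compl
  have hSPsq : Integrable (fun ω => (SP D 0 c S n ω) ^ 2) :=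
    (memLp_SP hDmeas hident hDsq hS n).integrable_sq
  have hmono := integral_mono hci hSPsq hptw
  rw [integral_indicator_const _ (alv_measurableSet hDmeas hS n).compl, smul_eq_mul] at hmono
  calc (ℙ ((alv D 0 c S n)ᶜ)).toReal * lam ^ 2 ≤ ∫ ω, (SP D 0 c S n ω) ^ 2 := hmono
  _ = (∫ ω, (D 1 ω + c) ^ 2) * ∑ k ∈ Finset.range n, pAlv D 0 c S k := by
      rw [hs]; ring
  _ ≤ (∫ ω, (D 1 ω + c) ^ 2) * n := by
      exact mul_le_mul_of_nonneg_left hPn hm2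


lemma eAlv_nonneg_Ioi (k : ℕ) : 0 ≤ eAlv D a 0 (Set.Ioi 0) k :=
  integral_nonneg (Set.indicator_nonneg fun ω hω => le_of_lt (hω k le_rfl))

lemma integral_ind_Dsq (hiid : iIndepFun D ℙ)
    (hDmeas : ∀ k, Measurable (D k))
    (hident : ∀ k, IdentDistrib (D k) (D 1) ℙ ℙ)
    (hDsq : Integrable (fun ω => (D 1 ω) ^ 2)) (hS : MeasurableSet S) (k : ℕ) :
    Integrable (Set.indicator (alv D a c S k) (fun ω' => (D (k + 1) ω') ^ 2)) ∧
    (∫ ω, Set.indicator (alv D a c S k) (fun ω' => (D (k + 1) ω') ^ 2) ω)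
      = pAlv D a c S k * ∫ ω, (D 1 ω) ^ 2 := by
  have hψi : Integrable (fun ω => (D (k + 1) ω) ^ 2) :=
    (memLp_D hDmeas hident hDsq (k + 1)).integrable_sq
  have h := integral_ind_mul_one (a := a) (c := c) hiid hDmeas hS k
    (fun y => y ^ 2) (by fun_prop) hψi
  have heq : Set.indicator (alv D a c S k) (fun ω' => (D (k + 1) ω') ^ 2)
      = fun ω => Set.indicator (alv D a c S k) (fun _ => (1:ℝ)) ω * (D (k + 1) ω) ^ 2 := by
    funext ω; by_cases hω : ω ∈ alv D a c S k <;> simp [hω]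
  have hDsqk : (∫ ω, (D (k + 1) ω) ^ 2) = ∫ ω, (D 1 ω) ^ 2 :=
    ((hident (k + 1)).comp (by fun_prop : Measurable (fun y : ℝ => y ^ 2))).integral_eq
  constructor
  · rw [heq]; exact h.1
  · rw [heq, h.2, hDsqk]

lemma sum_pAlv_bound (hiid : iIndepFun D ℙ)
    (hDmeas : ∀ k, Measurable (D k))
    (hident : ∀ k, IdentDistrib (D k) (D 1) ℙ ℙ)
    (hDint : Integrable (D 1))
    (hDsq : Integrable (fun ω => (D 1 ω) ^ 2))
    {δ : ℝ} (hδ : 0 < δ) (hmean : (∫ ω, D 1 ω) = -δ) (ha : 0 < a) (n : ℕ) :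
    ∑ k ∈ Finset.range n, pAlv D a 0 (Set.Ioi 0) k
      ≤ 4 / (3 * δ) * (a + (∫ ω, (D 1 ω) ^ 2) / δ) := by
  classical
  set S : Set ℝ := Set.Ioi 0 with hSdef
  have hS : MeasurableSet S := measurableSet_Ioi
  set m2 : ℝ := ∫ ω, (D 1 ω) ^ 2 with hm2def
  have hm2 : 0 ≤ m2 := integral_nonneg fun ω => sq_nonneg _
  set P : ℝ := ∑ k ∈ Finset.range n, pAlv D a 0 S k with hPdef
  have hPnn : 0 ≤ P := Finset.sum_nonneg fun k _ => pAlv_nonneg k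
  have hq : ∫ ω, SP D a 0 S n ω = a - δ * P := by
    rw [integral_SP_closed hiid hDmeas hident hDint hDsq hS n, hmean]
    ring
  set g : Ω → ℝ := fun ω => max (-(SP D a 0 S n ω)) 0 with hg
  have hgmeas : Measurable g := (measurable_SP hDmeas hS n).neg.max measurable_const
  have hSPint : Integrable (SP D a 0 S n) :=
    (memLp_SP hDmeas hident hDsq hS n).integrable one_le_two
  have hSPsq : Integrable (fun ω => (SP D a 0 S n ω) ^ 2) :=
    (memLp_SP hDmeas hident hDsq hS n).integrable_sq
  have hgabs : ∀ ω, |g ω| ≤ |SP D a 0 S n ω| := by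
    intro ω
    simp only [hg]
    rw [abs_of_nonneg (le_max_right _ _)]
    rcases le_or_gt (SP D a 0 S n ω) 0 with h | h
    · rw [max_eq_left (by linarith), abs_of_nonpos h]
    · rw [max_eq_right (by linarith)]; positivity
  have hgint : Integrable g :=
    hSPint.mono hgmeas.aestronglyMeasurable (Filter.Eventually.of_forall hgabs)
  have hg2int : Integrable (fun ω => g ω ^ 2) := by
    refine hSPsq.mono (hgmeas.pow_const 2).aestronglyMeasurable
      (Filter.Eventually.of_forall fun ω => ?_)
    have := hgabs ω
    simp only [Real.norm_eq_abs]
    rw [abs_of_nonneg (sq_nonneg (g ω)), abs_of_nonneg (sq_nonneg _)]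
    nlinarith [abs_nonneg (g ω), abs_nonneg (SP D a 0 S n ω), sq_abs (g ω),
      sq_abs (SP D a 0 S n ω)]
  have hptw : ∀ ω, g ω ^ 2
      ≤ ∑ k ∈ Finset.range n, Set.indicator (alv D a 0 S k)
          (fun ω' => (D (k + 1) ω') ^ 2) ω := by
    intro ω
    by_cases h : ω ∈ alv D a 0 S n
    · have h1 : 0 < rwpos D a 0 n ω := h n le_rfl
      have h2 : g ω = 0 := by
        show max (-(SP D a 0 S n ω)) 0 = 0
        rw [SP_eq_rwpos h]
        exact max_eq_right (by linarith)
      rw [h2]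
      simpa using Finset.sum_nonneg fun k _ =>
        Set.indicator_nonneg (fun ω' _ => sq_nonneg _) ω
    · obtain ⟨k0, hk01, hk0n, halv, hns, hSPn⟩ := SP_dead (Set.mem_Ioi.mpr ha) h
      obtain ⟨k1, rfl⟩ : ∃ k1, k0 = k1 + 1 := ⟨k0 - 1, by omega⟩
      have hmem : ω ∈ alv D a 0 S k1 := by simpa using halv
      have h1 : 0 < rwpos D a 0 k1 ω := hmem k1 le_rfl
      have h2 : rwpos D a 0 (k1 + 1) ω ≤ 0 :=
        le_of_not_gt fun hlt => hns (Set.mem_Ioi.mpr hlt)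
      have hstep : rwpos D a 0 (k1 + 1) ω = rwpos D a 0 k1 ω + (D (k1 + 1) ω + 0) :=
        rwpos_succ _ _
      have hgval : g ω ^ 2 ≤ (D (k1 + 1) ω) ^ 2 := by
        have hge : g ω = -(rwpos D a 0 (k1 + 1) ω) := by
          show max (-(SP D a 0 S n ω)) 0 = _
          rw [hSPn]
          exact max_eq_left (by linarith)
        nlinarith
      have hsingle : Set.indicator (alv D a 0 S k1) (fun ω' => (D (k1 + 1) ω') ^ 2) ω
          = (D (k1 + 1) ω) ^ 2 := Set.indicator_of_mem hmem _
      calc g ω ^ 2 ≤ (D (k1 + 1) ω) ^ 2 := hgval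
      _ = Set.indicator (alv D a 0 S k1) (fun ω' => (D (k1 + 1) ω') ^ 2) ω := hsingle.symm
      _ ≤ _ := Finset.single_le_sum
            (f := fun k => Set.indicator (alv D a 0 S k) (fun ω' => (D (k + 1) ω') ^ 2) ω)
            (fun k _ => Set.indicator_nonneg (fun ω' _ => sq_nonneg _) ω)
            (Finset.mem_range.mpr (by omega))
  have hg2 : ∫ ω, g ω ^ 2 ≤ m2 * P := by
    have hterms := fun k => integral_ind_Dsq (a := a) (c := 0) hiid hDmeas hident hDsq hS k
    calc ∫ ω, g ω ^ 2
        ≤ ∫ ω, ∑ k ∈ Finset.range n, Set.indicator (alv D a 0 S k)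
            (fun ω' => (D (k + 1) ω') ^ 2) ω :=
          integral_mono hg2int (integrable_finset_sum _ fun k _ => (hterms k).1) hptw
    _ = ∑ k ∈ Finset.range n, ∫ ω, Set.indicator (alv D a 0 S k)
            (fun ω' => (D (k + 1) ω') ^ 2) ω :=
          integral_finset_sum _ fun k _ => (hterms k).1
    _ = ∑ k ∈ Finset.range n, pAlv D a 0 S k * m2 := by
          exact Finset.sum_congr rfl fun k _ => (hterms k).2
    _ = m2 * P := by rw [← Finset.sum_mul, hPdef, mul_comm]
  have hqg : -(∫ ω, g ω) ≤ ∫ ω, SP D a 0 S n ω := by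
    rw [← integral_neg]
    refine integral_mono hgint.neg hSPint fun ω => ?_
    simp only [Pi.neg_apply, hg]
    rcases le_or_gt (SP D a 0 S n ω) 0 with h | h
    · rw [max_eq_left (by linarith)]; linarith
    · rw [max_eq_right (by linarith)]; linarith
  have hkey : δ * P ≤ a + ∫ ω, g ω := by rw [hq] at hqg; linarith
  by_contra hcon
  push_neg at hcon
  have hBpos : 0 < 4 / (3 * δ) * (a + m2 / δ) := by positivity
  have hPpos : 0 < P := lt_trans hBpos hcon
  set lam : ℝ := δ * P / 2 with hlam
  have hlampos : 0 < lam := by positivity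
  have hgle : ∫ ω, g ω ≤ lam / 2 + (∫ ω, g ω ^ 2) / (2 * lam) := by
    have hptw2 : ∀ ω, g ω ≤ lam / 2 + g ω ^ 2 / (2 * lam) := by
      intro ω
      have h2 : (0:ℝ) < 2 * lam := by linarith
      have hd : (2 * lam * g ω) / (2 * lam) ≤ (lam * lam + g ω ^ 2) / (2 * lam) :=
        (div_le_div_iff_of_pos_right h2).mpr (by nlinarith [sq_nonneg (g ω - lam)])
      calc g ω = (2 * lam * g ω) / (2 * lam) := by field_simp
      _ ≤ (lam * lam + g ω ^ 2) / (2 * lam) := hd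
      _ = lam / 2 + g ω ^ 2 / (2 * lam) := by field_simp
    calc ∫ ω, g ω ≤ ∫ ω, (lam / 2 + g ω ^ 2 / (2 * lam)) :=
          integral_mono hgint ((integrable_const _).add (hg2int.div_const _)) hptw2
    _ = lam / 2 + (∫ ω, g ω ^ 2) / (2 * lam) := by
          rw [integral_add (integrable_const _) (hg2int.div_const _), integral_const,
            integral_div]
          simp
  have hfin : δ * P ≤ a + δ * P / 4 + m2 / δ := by
    have h6 : (∫ ω, g ω ^ 2) / (2 * lam) ≤ m2 / δ := by
      rw [hlam]
      have h2lam : 2 * (δ * P / 2) = δ * P := by ring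
      rw [h2lam]
      calc (∫ ω, g ω ^ 2) / (δ * P) ≤ (m2 * P) / (δ * P) :=
            (div_le_div_iff_of_pos_right (by positivity)).mpr hg2
      _ = m2 / δ := by
            rw [mul_comm m2 P, mul_comm δ P, mul_div_mul_left _ _ (ne_of_gt hPpos)]
    have : lam / 2 = δ * P / 4 := by rw [hlam]; ring
    linarith
  have h7 : (4:ℝ)/3 * (a + m2/δ) < δ * P := by
    have h8 := mul_lt_mul_of_pos_left hcon hδ
    have hδ' : δ ≠ 0 := ne_of_gt hδ
    calc (4:ℝ)/3 * (a + m2/δ) = δ * (4/(3*δ) * (a + m2/δ)) := by field_simp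
    _ < δ * P := h8
  linarith


lemma memLp_rwpos (hDmeas : ∀ k, Measurable (D k))
    (hident : ∀ k, IdentDistrib (D k) (D 1) ℙ ℙ)
    (hDsq : Integrable (fun ω => (D 1 ω) ^ 2)) (n : ℕ) :
    MemLp (rwpos D a c n) 2 ℙ := by
  refine MemLp.add (memLp_const _) ?_
  have := memLp_finset_sum' (μ := (ℙ : Measure Ω)) (p := 2) (Finset.range n)
    (fun i _ => memLp_D hDmeas hident hDsq (i + 1))
  rw [show (fun ω => ∑ i ∈ Finset.range n, D (i + 1) ω)
      = ∑ i ∈ Finset.range n, D (i + 1) from funext fun ω => by simp]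
  exact this

lemma sum_eAlv_bound (hiid : iIndepFun D ℙ)
    (hDmeas : ∀ k, Measurable (D k))
    (hident : ∀ k, IdentDistrib (D k) (D 1) ℙ ℙ)
    (hDint : Integrable (D 1))
    (hDsq : Integrable (fun ω => (D 1 ω) ^ 2))
    {δ : ℝ} (hδ : 0 < δ) (hmean : (∫ ω, D 1 ω) = -δ) (ha : 0 < a) (n : ℕ) :
    2 * δ * ∑ k ∈ Finset.range n, eAlv D a 0 (Set.Ioi 0) k
      ≤ a ^ 2 + (∫ ω, (D 1 ω) ^ 2)
          * (4 / (3 * δ) * (a + (∫ ω, (D 1 ω) ^ 2) / δ)) := by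
  have hS : MeasurableSet (Set.Ioi (0:ℝ)) := measurableSet_Ioi
  have hs := integral_SP_sq_closed (a := a) (c := 0) (S := Set.Ioi 0) hiid hDmeas hident hDint
    hDsq hS n
  have hm2eq : (∫ ω, (D 1 ω + 0) ^ 2) = ∫ ω, (D 1 ω) ^ 2 := by simp
  rw [hm2eq, hmean] at hs
  have hs0 : 0 ≤ ∫ ω, (SP D a 0 (Set.Ioi 0) n ω) ^ 2 := integral_nonneg fun ω => sq_nonneg _
  have hm2 : 0 ≤ ∫ ω, (D 1 ω) ^ 2 := integral_nonneg fun ω => sq_nonneg _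
  have hP := sum_pAlv_bound hiid hDmeas hident hDint hDsq hδ hmean ha n
  nlinarith [mul_le_mul_of_nonneg_left hP hm2]

lemma rwpos_shift (j : ℕ) {δ : ℝ} (ω : Ω) :
    rwpos D a 0 j ω = rwpos D 0 δ j ω + (a - δ * j) := by
  unfold rwpos
  push_cast
  ring

lemma integral_Dpδ_sq (hDint : Integrable (D 1))
    (hDsq : Integrable (fun ω => (D 1 ω) ^ 2))
    {δ : ℝ} (hmean : (∫ ω, D 1 ω) = -δ) :
    (∫ ω, (D 1 ω + δ) ^ 2) = (∫ ω, (D 1 ω) ^ 2) - δ ^ 2 := by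
  have heq : (fun ω => (D 1 ω + δ) ^ 2)
      = fun ω => D 1 ω ^ 2 + (2 * δ * D 1 ω + δ ^ 2) := funext fun ω => by ring
  have hi1 : Integrable (fun ω => 2 * δ * D 1 ω) := hDint.const_mul _
  have hi2 : Integrable (fun ω => 2 * δ * D 1 ω + δ ^ 2) := hi1.add (integrable_const _)
  rw [heq, integral_add hDsq hi2, integral_add hi1 (integrable_const _), integral_const,
    integral_const_mul, hmean]
  simp only [measureReal_def, measure_univ, ENNReal.toReal_one, smul_eq_mul, one_mul]
  ring

set_option maxHeartbeats 2000000 in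
lemma eAlv_lower (hiid : iIndepFun D ℙ)
    (hDmeas : ∀ k, Measurable (D k))
    (hident : ∀ k, IdentDistrib (D k) (D 1) ℙ ℙ)
    (hDint : Integrable (D 1))
    (hDsq : Integrable (fun ω => (D 1 ω) ^ 2))
    {δ : ℝ} (hδ : 0 < δ) (hmean : (∫ ω, D 1 ω) = -δ)
    (ha : 1 ≤ a) {θ : ℝ} (hθ0 : 0 ≤ θ) (hθ1 : θ < 1) {k : ℕ} (hk : δ * k ≤ θ * a) :
    (a - δ * k) - ((((∫ ω, (D 1 ω) ^ 2) - δ ^ 2) * θ / (δ * (1 - θ) ^ 2)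
        + (1 + ((∫ ω, (D 1 ω) ^ 2) - δ ^ 2) / δ)) / 2) * Real.sqrt a
      ≤ eAlv D a 0 (Set.Ioi 0) k := by
  classical
  have ha0 : (0:ℝ) < a := lt_of_lt_of_le one_pos ha
  set m2 : ℝ := ∫ ω, (D 1 ω) ^ 2 with hm2def
  set sig2 : ℝ := m2 - δ ^ 2 with hsig2def
  have hsig_eq : (∫ ω, (D 1 ω + δ) ^ 2) = sig2 := integral_Dpδ_sq hDint hDsq hmean
  have hsig_nn : 0 ≤ sig2 := hsig_eq ▸ integral_nonneg fun ω => sq_nonneg _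
  have hθa : 0 < 1 - θ := by linarith
  have hS : MeasurableSet (Set.Ioi (0:ℝ)) := measurableSet_Ioi
  set A : Set Ω := alv D a 0 (Set.Ioi 0) k with hAdef
  have hA : MeasurableSet A := alv_measurableSet hDmeas hS k
  set s : ℝ := Real.sqrt a with hsdef
  have hs0 : 0 < s := Real.sqrt_pos.mpr ha0
  have hsa : s * s = a := Real.mul_self_sqrt (le_of_lt ha0)
  set lam : ℝ := a * s with hlamdef
  have hlam0 : 0 < lam := by positivity
  -- Integrabilities
  have hposL2 := memLp_rwpos (a := a) (c := 0) hDmeas hident hDsq k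
  have hposint : Integrable (rwpos D a 0 k) := hposL2.integrable one_le_two
  have hpossq : Integrable (fun ω => (rwpos D a 0 k ω) ^ 2) := hposL2.integrable_sq
  have hindint : Integrable (Set.indicator Aᶜ (rwpos D a 0 k)) :=
    (hposL2.indicator hA.compl).integrable one_le_two
  -- splitting
  have hsplit : eAlv D a 0 (Set.Ioi 0) k
      = (∫ ω, rwpos D a 0 k ω) - ∫ ω, Set.indicator Aᶜ (rwpos D a 0 k) ω := by
    rw [← integral_sub hposint hindint]
    unfold eAlv
    refine integral_congr_ae (Filter.Eventually.of_forall fun ω => ?_)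
    show Set.indicator A (rwpos D a 0 k) ω
      = rwpos D a 0 k ω - Set.indicator Aᶜ (rwpos D a 0 k) ω
    by_cases h : ω ∈ A
    · rw [Set.indicator_of_mem h, Set.indicator_of_notMem (by simpa using h)]; ring
    · rw [Set.indicator_of_notMem h, Set.indicator_of_mem (by simpa using h)]
      simp
  have hmen : (∫ ω, rwpos D a 0 k ω) = a - δ * k := by
    rw [integral_rwpos hiid hDmeas hident hDint hDsq, hmean]
    ring
  -- second moment
  have hM : (∫ ω, (rwpos D a 0 k ω) ^ 2) = (a - δ * k) ^ 2 + sig2 * k := by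
    rw [integral_rwpos_sq hiid hDmeas hident hDint hDsq]
    simp only [add_zero, hmean]
    rw [hsig2def, hm2def]
    ring
  have hMle : (∫ ω, (rwpos D a 0 k ω) ^ 2) ≤ (1 + sig2 / δ) * a ^ 2 := by
    rw [hM]
    have h1 : 0 ≤ a - δ * k := by nlinarith
    have h2 : (a - δ * k) ^ 2 ≤ a ^ 2 := by nlinarith [mul_nonneg (le_of_lt hδ) (Nat.cast_nonneg k : (0:ℝ) ≤ k)]
    have h3 : sig2 * k ≤ sig2 / δ * a ^ 2 := by
      rw [div_mul_eq_mul_div, le_div_iff₀ hδ]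
      have hka : (k:ℝ) * δ ≤ a := by nlinarith
      nlinarith [mul_le_mul_of_nonneg_left hka hsig_nn,
        mul_nonneg hsig_nn (mul_nonneg (le_of_lt ha0) (sub_nonneg.mpr ha))]
    nlinarith
  -- Kolmogorov bound for the dead probability
  set lamZ : ℝ := (1 - θ) * a with hlamZdef
  have hlamZ0 : 0 < lamZ := by positivity
  have hincl : alv D 0 δ (Set.Ioi (-lamZ)) k ⊆ A := by
    intro ω hω j hj
    have h1 : rwpos D 0 δ j ω > -lamZ := hω j hj
    have h2 : rwpos D a 0 j ω = rwpos D 0 δ j ω + (a - δ * j) := rwpos_shift j ω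
    have h3 : δ * j ≤ δ * k :=
      mul_le_mul_of_nonneg_left ((Nat.cast_le (α := ℝ)).mpr hj) (le_of_lt hδ)
    show (0:ℝ) < rwpos D a 0 j ω
    rw [h2]
    rw [hlamZdef] at h1
    nlinarith
  have hkol := kolmogorov_bound hiid hDmeas hident hDint hDsq δ lamZ
    (by rw [hmean]; ring) hlamZ0 k
  rw [hsig_eq] at hkol
  have hPd : (ℙ Aᶜ).toReal * lamZ ^ 2 ≤ sig2 * k := by
    have h1 : (ℙ Aᶜ).toReal ≤ (ℙ ((alv D 0 δ (Set.Ioi (-lamZ)) k)ᶜ)).toReal :=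
      ENNReal.toReal_mono (measure_ne_top _ _)
        (measure_mono (Set.compl_subset_compl.mpr hincl))
    nlinarith [sq_nonneg lamZ, ENNReal.toReal_nonneg (a := ℙ ((alv D 0 δ (Set.Ioi (-lamZ)) k)ᶜ))]
  have hPd2 : (ℙ Aᶜ).toReal ≤ (sig2 * θ / (δ * (1 - θ) ^ 2)) / a := by
    have hpos1 : (0:ℝ) < lamZ ^ 2 := by positivity
    have e1 : (ℙ Aᶜ).toReal ≤ sig2 * k / lamZ ^ 2 := by
      rw [le_div_iff₀ hpos1]; exact hPd
    refine e1.trans ?_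
    rw [div_le_div_iff₀ hpos1 ha0]
    have hYl : sig2 * θ / (δ * (1 - θ) ^ 2) * lamZ ^ 2 = sig2 * θ * a ^ 2 / δ := by
      rw [hlamZdef]; field_simp
    rw [hYl, le_div_iff₀ hδ]
    nlinarith [mul_le_mul_of_nonneg_left hk (mul_nonneg hsig_nn (le_of_lt ha0))]
  -- pointwise AM-GM bound on the dead part
  have hptw : ∀ ω, Set.indicator Aᶜ (rwpos D a 0 k) ω
      ≤ lam / 2 * Set.indicator Aᶜ (fun _ => (1:ℝ)) ω + (rwpos D a 0 k ω) ^ 2 / (2 * lam) := by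
    intro ω
    by_cases h : ω ∈ Aᶜ
    · rw [Set.indicator_of_mem h, Set.indicator_of_mem h, mul_one]
      set p := rwpos D a 0 k ω
      have h2 : (0:ℝ) < 2 * lam := by linarith
      have hd : (2 * lam * p) / (2 * lam) ≤ (lam * lam + p ^ 2) / (2 * lam) :=
        (div_le_div_iff_of_pos_right h2).mpr (by nlinarith [sq_nonneg (p - lam)])
      calc p = (2 * lam * p) / (2 * lam) := by field_simp
      _ ≤ (lam * lam + p ^ 2) / (2 * lam) := hd
      _ = lam / 2 + p ^ 2 / (2 * lam) := by field_simp
    · rw [Set.indicator_of_notMem h, Set.indicator_of_notMem h]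
      positivity
  have hIdead : (∫ ω, Set.indicator Aᶜ (rwpos D a 0 k) ω)
      ≤ lam / 2 * (ℙ Aᶜ).toReal + (∫ ω, (rwpos D a 0 k ω) ^ 2) / (2 * lam) := by
    have hint2 : Integrable (fun ω => lam / 2 * Set.indicator Aᶜ (fun _ => (1:ℝ)) ω
        + (rwpos D a 0 k ω) ^ 2 / (2 * lam)) :=
      (((integrable_const (1:ℝ)).indicator hA.compl).const_mul _).add (hpossq.div_const _)
    calc (∫ ω, Set.indicator Aᶜ (rwpos D a 0 k) ω)
        ≤ ∫ ω, (lam / 2 * Set.indicator Aᶜ (fun _ => (1:ℝ)) ω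
            + (rwpos D a 0 k ω) ^ 2 / (2 * lam)) := integral_mono hindint hint2 hptw
    _ = lam / 2 * (ℙ Aᶜ).toReal + (∫ ω, (rwpos D a 0 k ω) ^ 2) / (2 * lam) := by
        rw [integral_add (((integrable_const (1:ℝ)).indicator hA.compl).const_mul _)
          (hpossq.div_const _), integral_const_mul, integral_div,
          integral_indicator_const _ hA.compl, smul_eq_mul, mul_one, measureReal_def]
  -- assembling
  have hp1 : lam / 2 * (ℙ Aᶜ).toReal ≤ sig2 * θ / (δ * (1 - θ) ^ 2) / 2 * s := by
    calc lam / 2 * (ℙ Aᶜ).toReal ≤ lam / 2 * ((sig2 * θ / (δ * (1 - θ) ^ 2)) / a) :=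
          mul_le_mul_of_nonneg_left hPd2 (by positivity)
    _ = sig2 * θ / (δ * (1 - θ) ^ 2) / 2 * s := by
        rw [hlamdef]; field_simp
  have hp2 : (∫ ω, (rwpos D a 0 k ω) ^ 2) / (2 * lam) ≤ (1 + sig2 / δ) / 2 * s := by
    calc (∫ ω, (rwpos D a 0 k ω) ^ 2) / (2 * lam)
        ≤ ((1 + sig2 / δ) * a ^ 2) / (2 * lam) := (div_le_div_iff_of_pos_right (by positivity)).mpr hMle
    _ = (1 + sig2 / δ) / 2 * s := by
        rw [hlamdef, ← hsa]; field_simp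
  rw [hsplit, hmen]
  have := hIdead
  nlinarith [hp1, hp2]


/-! ### Identification with the reflected walk before the hitting time -/

variable {x : ℝ} {Φ : ℝ → ℕ → Ω → ℝ} {τ : ℝ → Ω → ℝ≥0∞}

lemma Phi_eq_of_alive (hΦ0 : ∀ r ω, Φ r 0 ω = r * x)
    (hΦstep : ∀ r k ω, Φ r (k + 1) ω = max (Φ r k ω + D (k + 1) ω) 0)
    {r : ℝ} (ω : Ω) :
    ∀ k, (∀ j ≤ k, 0 < rwpos D (r * x) 0 j ω) →
      ∀ j ≤ k, Φ r j ω = rwpos D (r * x) 0 j ω := by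
  intro k
  induction k with
  | zero =>
    intro _ j hj
    have : j = 0 := Nat.le_zero.mp hj
    subst this
    rw [hΦ0, rwpos_zero]
  | succ k ih =>
    intro h j hj
    rcases Nat.lt_or_ge j (k + 1) with hlt | hge
    · exact ih (fun i hi => h i (by omega)) j (by omega)
    · have hj1 : j = k + 1 := by omega
      subst hj1
      have hk : Φ r k ω = rwpos D (r * x) 0 k ω :=
        ih (fun i hi => h i (by omega)) k le_rfl
      have hp : 0 < rwpos D (r * x) 0 (k + 1) ω := h (k + 1) le_rfl
      rw [hΦstep, hk]
      have : rwpos D (r * x) 0 k ω + D (k + 1) ω = rwpos D (r * x) 0 (k + 1) ω := by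
        rw [rwpos_succ]; ring
      rw [this]
      exact max_eq_left (le_of_lt hp)

lemma alive_of_Phi_ne (hΦ0 : ∀ r ω, Φ r 0 ω = r * x)
    (hΦstep : ∀ r k ω, Φ r (k + 1) ω = max (Φ r k ω + D (k + 1) ω) 0)
    {r : ℝ} (hrx : 0 < r * x) (ω : Ω) :
    ∀ k, (∀ j, 1 ≤ j → j ≤ k → Φ r j ω ≠ 0) →
      ∀ j ≤ k, 0 < rwpos D (r * x) 0 j ω ∧ Φ r j ω = rwpos D (r * x) 0 j ω := by
  intro k
  induction k with
  | zero =>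
    intro _ j hj
    have : j = 0 := Nat.le_zero.mp hj
    subst this
    rw [hΦ0, rwpos_zero]
    exact ⟨hrx, rfl⟩
  | succ k ih =>
    intro h j hj
    rcases Nat.lt_or_ge j (k + 1) with hlt | hge
    · exact ih (fun i hi1 hi2 => h i hi1 (by omega)) j (by omega)
    · have hj1 : j = k + 1 := by omega
      subst hj1
      obtain ⟨hpk, hek⟩ := ih (fun i hi1 hi2 => h i hi1 (by omega)) k le_rfl
      have hstep : Φ r (k + 1) ω = max (rwpos D (r * x) 0 (k + 1) ω) 0 := by
        rw [hΦstep, hek]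
        congr 1
        rw [rwpos_succ]; ring
      have hne : Φ r (k + 1) ω ≠ 0 := h (k + 1) (by omega) le_rfl
      have hgt : 0 < rwpos D (r * x) 0 (k + 1) ω := by
        by_contra hcon
        push_neg at hcon
        exact hne (by rw [hstep]; exact max_eq_right hcon)
      exact ⟨hgt, by rw [hstep]; exact max_eq_left (le_of_lt hgt)⟩

lemma tau_set_eq (hΦ0 : ∀ r ω, Φ r 0 ω = r * x)
    (hΦstep : ∀ r k ω, Φ r (k + 1) ω = max (Φ r k ω + D (k + 1) ω) 0)
    (hτ : ∀ r ω, τ r ω = ⨅ (k : ℕ) (_ : 1 ≤ k ∧ Φ r k ω = 0), (k : ℝ≥0∞))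
    {r : ℝ} (hrx : 0 < r * x) (k : ℕ) :
    {ω | (k : ℝ≥0∞) < τ r ω} = alv D (r * x) 0 (Set.Ioi 0) k := by
  ext ω
  simp only [Set.mem_setOf_eq]
  constructor
  · intro h
    have hne : ∀ j, 1 ≤ j → j ≤ k → Φ r j ω ≠ 0 := by
      intro j hj1 hjk hj0
      have : τ r ω ≤ (j : ℝ≥0∞) := by
        rw [hτ]
        exact iInf_le_of_le j (iInf_le _ ⟨hj1, hj0⟩)
      have hkj : (k : ℝ≥0∞) < (j : ℝ≥0∞) := lt_of_lt_of_le h this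
      have : k < j := by exact_mod_cast hkj
      omega
    intro j hj
    exact (alive_of_Phi_ne hΦ0 hΦstep hrx ω k hne j hj).1
  · intro h
    have hΦeq := Phi_eq_of_alive hΦ0 hΦstep ω k (fun j hj => h j hj)
    rw [hτ]
    have hge : ((k : ℝ≥0∞) + 1) ≤ ⨅ (m : ℕ) (_ : 1 ≤ m ∧ Φ r m ω = 0), (m : ℝ≥0∞) := by
      refine le_iInf fun m => le_iInf fun hm => ?_
      have hkm : k < m := by
        by_contra hcon
        push_neg at hcon
        have h1 := hΦeq m hcon
        have h2 := h m hcon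
        rw [h1] at hm
        exact absurd hm.2 (ne_of_gt h2)
      calc (k : ℝ≥0∞) + 1 = ((k + 1 : ℕ) : ℝ≥0∞) := by push_cast; ring
      _ ≤ (m : ℝ≥0∞) := by exact_mod_cast hkm
    calc (k : ℝ≥0∞) < (k : ℝ≥0∞) + 1 :=
          ENNReal.lt_add_right (ENNReal.natCast_ne_top k) one_ne_zero
    _ ≤ _ := hge

lemma lintegral_eq_tsum (hiid : iIndepFun D ℙ)
    (hDmeas : ∀ k, Measurable (D k))
    (hident : ∀ k, IdentDistrib (D k) (D 1) ℙ ℙ)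
    (hDsq : Integrable (fun ω => (D 1 ω) ^ 2))
    (hΦ0 : ∀ r ω, Φ r 0 ω = r * x)
    (hΦstep : ∀ r k ω, Φ r (k + 1) ω = max (Φ r k ω + D (k + 1) ω) 0)
    (hτ : ∀ r ω, τ r ω = ⨅ (k : ℕ) (_ : 1 ≤ k ∧ Φ r k ω = 0), (k : ℝ≥0∞))
    {r : ℝ} (hrx : 0 < r * x) :
    (∫⁻ ω, ∑' k : ℕ,
        Set.indicator {k : ℕ | (k : ℝ≥0∞) < τ r ω}
          (fun k => ENNReal.ofReal (Φ r k ω)) k)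
      = ∑' k : ℕ, ENNReal.ofReal (eAlv D (r * x) 0 (Set.Ioi 0) k) := by
  have hS : MeasurableSet (Set.Ioi (0:ℝ)) := measurableSet_Ioi
  have hA : ∀ k, MeasurableSet (alv D (r * x) 0 (Set.Ioi 0) k) :=
    fun k => alv_measurableSet hDmeas hS k
  have h1 : ∀ ω (k : ℕ), Set.indicator {k : ℕ | (k : ℝ≥0∞) < τ r ω}
      (fun k => ENNReal.ofReal (Φ r k ω)) k
      = Set.indicator (alv D (r * x) 0 (Set.Ioi 0) k)
          (fun ω => ENNReal.ofReal (rwpos D (r * x) 0 k ω)) ω := by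
    intro ω k
    have hset := tau_set_eq hΦ0 hΦstep hτ hrx (r := r) k
    by_cases h : (k : ℝ≥0∞) < τ r ω
    · have hω : ω ∈ alv D (r * x) 0 (Set.Ioi 0) k := by
        rw [← hset]; exact h
      have hΦeq : Φ r k ω = rwpos D (r * x) 0 k ω :=
        Phi_eq_of_alive hΦ0 hΦstep ω k (fun j hj => hω j hj) k le_rfl
      rw [Set.indicator_of_mem (by exact h) (fun k => ENNReal.ofReal (Φ r k ω)),
        Set.indicator_of_mem hω, hΦeq]
    · have hω : ω ∉ alv D (r * x) 0 (Set.Ioi 0) k := by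
        rw [← hset]; exact h
      rw [Set.indicator_of_notMem (by exact h) (fun k => ENNReal.ofReal (Φ r k ω)),
        Set.indicator_of_notMem hω]
  calc (∫⁻ ω, ∑' k : ℕ, Set.indicator {k : ℕ | (k : ℝ≥0∞) < τ r ω}
          (fun k => ENNReal.ofReal (Φ r k ω)) k)
      = ∫⁻ ω, ∑' k : ℕ, Set.indicator (alv D (r * x) 0 (Set.Ioi 0) k)
          (fun ω => ENNReal.ofReal (rwpos D (r * x) 0 k ω)) ω := by
        refine lintegral_congr fun ω => tsum_congr fun k => h1 ω k
  _ = ∑' k : ℕ, ∫⁻ ω, Set.indicator (alv D (r * x) 0 (Set.Ioi 0) k)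
          (fun ω => ENNReal.ofReal (rwpos D (r * x) 0 k ω)) ω := by
        refine lintegral_tsum fun k => ?_
        exact (((measurable_rwpos hDmeas k).ennreal_ofReal).indicator (hA k)).aemeasurable
  _ = ∑' k : ℕ, ENNReal.ofReal (eAlv D (r * x) 0 (Set.Ioi 0) k) := by
        refine tsum_congr fun k => ?_
        rw [lintegral_indicator (hA k)]
        have hint : Integrable (rwpos D (r * x) 0 k) ((ℙ : Measure Ω).restrict (alv D (r * x) 0 (Set.Ioi 0) k)) :=
          ((memLp_rwpos hDmeas hident hDsq k).integrable one_le_two).restrict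
        have hnn : 0 ≤ᵐ[(ℙ : Measure Ω).restrict (alv D (r * x) 0 (Set.Ioi 0) k)] rwpos D (r * x) 0 k := by
          rw [EventuallyLE, ae_restrict_iff' (hA k)]
          exact Filter.Eventually.of_forall fun ω hω => le_of_lt (hω k le_rfl)
        rw [← ofReal_integral_eq_lintegral_ofReal hint hnn]
        congr 1
        rw [eAlv, ← integral_indicator (hA k)]


lemma J_le_ofReal (hiid : iIndepFun D ℙ)
    (hDmeas : ∀ k, Measurable (D k))
    (hident : ∀ k, IdentDistrib (D k) (D 1) ℙ ℙ)
    (hDint : Integrable (D 1))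
    (hDsq : Integrable (fun ω => (D 1 ω) ^ 2))
    {δ : ℝ} (hδ : 0 < δ) (hmean : (∫ ω, D 1 ω) = -δ) (ha : 0 < a) :
    (∑' k : ℕ, ENNReal.ofReal (eAlv D a 0 (Set.Ioi 0) k))
      ≤ ENNReal.ofReal ((a ^ 2 + (∫ ω, (D 1 ω) ^ 2)
          * (4 / (3 * δ) * (a + (∫ ω, (D 1 ω) ^ 2) / δ))) / (2 * δ)) := by
  rw [ENNReal.tsum_eq_iSup_nat]
  refine iSup_le fun n => ?_
  rw [← ENNReal.ofReal_sum_of_nonneg (fun k _ => eAlv_nonneg_Ioi k)]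
  apply ENNReal.ofReal_le_ofReal
  have h := sum_eAlv_bound hiid hDmeas hident hDint hDsq hδ hmean ha n
  rw [le_div_iff₀ (by positivity : (0:ℝ) < 2 * δ)]
  linarith

lemma J_toReal_le (hiid : iIndepFun D ℙ)
    (hDmeas : ∀ k, Measurable (D k))
    (hident : ∀ k, IdentDistrib (D k) (D 1) ℙ ℙ)
    (hDint : Integrable (D 1))
    (hDsq : Integrable (fun ω => (D 1 ω) ^ 2))
    {δ : ℝ} (hδ : 0 < δ) (hmean : (∫ ω, D 1 ω) = -δ) (ha : 0 < a) :
    (∑' k : ℕ, ENNReal.ofReal (eAlv D a 0 (Set.Ioi 0) k)).toReal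
      ≤ (a ^ 2 + (∫ ω, (D 1 ω) ^ 2)
          * (4 / (3 * δ) * (a + (∫ ω, (D 1 ω) ^ 2) / δ))) / (2 * δ) := by
  have hm2 : 0 ≤ ∫ ω, (D 1 ω) ^ 2 := integral_nonneg fun ω => sq_nonneg _
  refine ENNReal.toReal_le_of_le_ofReal ?_ (J_le_ofReal hiid hDmeas hident hDint hDsq hδ hmean ha)
  apply div_nonneg _ (by positivity)
  have : 0 ≤ (∫ ω, (D 1 ω) ^ 2) * (4 / (3 * δ) * (a + (∫ ω, (D 1 ω) ^ 2) / δ)) := by positivity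
  nlinarith

lemma J_ne_top (hiid : iIndepFun D ℙ)
    (hDmeas : ∀ k, Measurable (D k))
    (hident : ∀ k, IdentDistrib (D k) (D 1) ℙ ℙ)
    (hDint : Integrable (D 1))
    (hDsq : Integrable (fun ω => (D 1 ω) ^ 2))
    {δ : ℝ} (hδ : 0 < δ) (hmean : (∫ ω, D 1 ω) = -δ) (ha : 0 < a) :
    (∑' k : ℕ, ENNReal.ofReal (eAlv D a 0 (Set.Ioi 0) k)) ≠ ⊤ :=
  ne_top_of_le_ne_top ENNReal.ofReal_ne_top
    (J_le_ofReal hiid hDmeas hident hDint hDsq hδ hmean ha)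

lemma J_toReal_ge (hiid : iIndepFun D ℙ)
    (hDmeas : ∀ k, Measurable (D k))
    (hident : ∀ k, IdentDistrib (D k) (D 1) ℙ ℙ)
    (hDint : Integrable (D 1))
    (hDsq : Integrable (fun ω => (D 1 ω) ^ 2))
    {δ : ℝ} (hδ : 0 < δ) (hmean : (∫ ω, D 1 ω) = -δ)
    (ha : 1 ≤ a) {θ : ℝ} (hθ0 : 0 ≤ θ) (hθ1 : θ < 1) :
    θ * (1 - θ / 2) * a ^ 2 / δ
      - (θ * a / δ + 1) * ((((∫ ω, (D 1 ω) ^ 2) - δ ^ 2) * θ / (δ * (1 - θ) ^ 2)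
          + (1 + ((∫ ω, (D 1 ω) ^ 2) - δ ^ 2) / δ)) / 2) * Real.sqrt a
      ≤ (∑' k : ℕ, ENNReal.ofReal (eAlv D a 0 (Set.Ioi 0) k)).toReal := by
  have ha0 : (0:ℝ) < a := lt_of_lt_of_le one_pos ha
  set m2 : ℝ := ∫ ω, (D 1 ω) ^ 2 with hm2def
  set sig2 : ℝ := m2 - δ ^ 2 with hsig2def
  have hsig_nn : 0 ≤ sig2 := by
    rw [hsig2def, hm2def, ← integral_Dpδ_sq hDint hDsq hmean]
    exact integral_nonneg fun ω => sq_nonneg _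
  set K : ℝ := (sig2 * θ / (δ * (1 - θ) ^ 2) + (1 + sig2 / δ)) / 2 with hKdef
  have hθ1' : (0:ℝ) < 1 - θ := by linarith
  have hK0 : 0 ≤ K := by positivity
  have hs0 : (0:ℝ) ≤ Real.sqrt a := Real.sqrt_nonneg a
  set m : ℕ := Nat.floor (θ * a / δ) with hmdef
  have hm_le : (m : ℝ) ≤ θ * a / δ := Nat.floor_le (by positivity)
  have hm_gt : θ * a / δ < (m : ℝ) + 1 := Nat.lt_floor_add_one _
  have hδm : δ * (m : ℝ) ≤ θ * a := by
    have h1 := mul_le_mul_of_nonneg_left hm_le (le_of_lt hδ)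
    have h2 : δ * (θ * a / δ) = θ * a := by field_simp
    linarith
  set J : ℝ≥0∞ := ∑' k : ℕ, ENNReal.ofReal (eAlv D a 0 (Set.Ioi 0) k) with hJdef
  have hlow : ∀ k, k ≤ m → (a - δ * k) - K * Real.sqrt a ≤ eAlv D a 0 (Set.Ioi 0) k := by
    intro k hk
    have hδk : δ * (k : ℝ) ≤ θ * a :=
      le_trans (mul_le_mul_of_nonneg_left ((Nat.cast_le (α := ℝ)).mpr hk) (le_of_lt hδ)) hδm
    exact eAlv_lower hiid hDmeas hident hDint hDsq hδ hmean ha hθ0 hθ1 hδk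
  have hsum : ∑ k ∈ Finset.range (m + 1), ((a - δ * (k:ℝ)) - K * Real.sqrt a)
      ≤ ∑ k ∈ Finset.range (m + 1), eAlv D a 0 (Set.Ioi 0) k :=
    Finset.sum_le_sum fun k hk => hlow k (by
      have := Finset.mem_range.mp hk; omega)
  have hsum_eval : ∑ k ∈ Finset.range (m + 1), ((a - δ * (k:ℝ)) - K * Real.sqrt a)
      = ((m:ℝ) + 1) * (a - δ * (m:ℝ) / 2) - ((m:ℝ) + 1) * K * Real.sqrt a := by
    rw [Finset.sum_sub_distrib, Finset.sum_sub_distrib, Finset.sum_const, Finset.sum_const,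
      Finset.card_range, ← Finset.mul_sum, sum_range_cast]
    push_cast
    ring
  have hE_le : ∑ k ∈ Finset.range (m + 1), eAlv D a 0 (Set.Ioi 0) k ≤ J.toReal := by
    have hof := ENNReal.ofReal_sum_of_nonneg
      (s := Finset.range (m + 1)) (f := fun k => eAlv D a 0 (Set.Ioi 0) k)
      (fun k _ => eAlv_nonneg_Ioi k)
    have hle : (∑ k ∈ Finset.range (m + 1), ENNReal.ofReal (eAlv D a 0 (Set.Ioi 0) k)) ≤ J :=
      ENNReal.sum_le_tsum _
    exact (ENNReal.ofReal_le_iff_le_toReal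
      (J_ne_top hiid hDmeas hident hDint hDsq hδ hmean ha0)).mp (hof ▸ hle)
  have hnum : θ * (1 - θ / 2) * a ^ 2 / δ ≤ ((m:ℝ) + 1) * (a - δ * (m:ℝ) / 2) := by
    have h1 : θ * a / δ ≤ (m:ℝ) + 1 := le_of_lt hm_gt
    have h2 : a - θ * a / 2 ≤ a - δ * (m:ℝ) / 2 := by linarith
    have h3 : 0 ≤ a - θ * a / 2 := by nlinarith
    have h4 : 0 ≤ θ * a / δ := by positivity
    calc θ * (1 - θ / 2) * a ^ 2 / δ = (θ * a / δ) * (a - θ * a / 2) := by field_simp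
    _ ≤ ((m:ℝ) + 1) * (a - δ * (m:ℝ) / 2) := mul_le_mul h1 h2 h3 (by positivity)
  have hKt : ((m:ℝ) + 1) * K * Real.sqrt a ≤ (θ * a / δ + 1) * K * Real.sqrt a := by
    have h1 : (m:ℝ) + 1 ≤ θ * a / δ + 1 := by linarith
    exact mul_le_mul_of_nonneg_right (mul_le_mul_of_nonneg_right h1 hK0) hs0
  linarith

end RRWProof


private lemma arith_A {a q : ℝ} (ha : 1 ≤ a) (hq : 0 ≤ q) : a + q ≤ (1 + q) * a := by nlinarith

private lemma arith_B {θ a : ℝ} (hθ : θ < 1) (hθ0 : 0 ≤ θ) (ha : 0 < a) : θ * a ≤ a := by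
  nlinarith

private lemma arith_C {x2 η ε δ : ℝ} (h2 : x2 * η ≤ ε * δ) (hη1 : η ≤ 1) (hη0 : 0 < η)
    (hx2 : 0 < x2) : x2 * η ^ 2 ≤ ε * δ := by
  have h := mul_le_mul_of_nonneg_left hη1 (le_of_lt (mul_pos hx2 hη0))
  nlinarith [h]

private lemma arith_D {x2 η ε δ : ℝ} (h3 : x2 * η ^ 2 ≤ ε * δ) (hδ : 0 < δ)
    (hx2 : 0 < x2) : x2 * η ^ 2 / (2 * δ) ≤ ε / 2 := by
  rw [div_le_div_iff₀ (by positivity) (by norm_num : (0:ℝ) < 2)]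
  nlinarith

private lemma arith_E {C ε a : ℝ} (hC : 0 ≤ C) (hε : 0 < ε) (haB : 2 * C / ε + 1 ≤ a) :
    C ≤ ε / 2 * a := by
  have hc : ε * (2 * C / ε) = 2 * C := by field_simp
  nlinarith

private lemma arith_F {C ε s : ℝ} (hC : 0 ≤ C) (hε : 0 < ε) (hsB : 4 * C / ε + 1 ≤ s) :
    C ≤ ε / 4 * s := by
  have hc : ε * (4 * C / ε) = 4 * C := by field_simp
  nlinarith

set_option maxHeartbeats 2000000 in
/-- **Proposition 3.2(ii), second limit.** -/
theorem reflected_rw_area_fluid_limit {Ω : Type*} [MeasureSpace Ω]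
    [IsProbabilityMeasure (ℙ : Measure Ω)]
    (D : ℕ → Ω → ℝ) (hDmeas : ∀ k, Measurable (D k))
    (hiid : iIndepFun D)
    (hident : ∀ k, IdentDistrib (D k) (D 1))
    (δ : ℝ) (hδ : 0 < δ) (hDint : Integrable (D 1)) (hmean : (∫ ω, D 1 ω) = -δ)
    (hDsq : Integrable (fun ω => (D 1 ω) ^ 2))
    (hpos : 0 < ℙ {ω | 0 < D 1 ω})
    (x : ℝ) (hx : 0 < x)
    (Φ : ℝ → ℕ → Ω → ℝ)
    (hΦ0 : ∀ r ω, Φ r 0 ω = r * x)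
    (hΦstep : ∀ r k ω, Φ r (k + 1) ω = max (Φ r k ω + D (k + 1) ω) 0)
    (τ : ℝ → Ω → ℝ≥0∞)
    (hτ : ∀ r ω, τ r ω = ⨅ (k : ℕ) (_ : 1 ≤ k ∧ Φ r k ω = 0), (k : ℝ≥0∞)) :
    Tendsto (fun r : ℝ => (r ^ 2)⁻¹ *
        (∫⁻ ω, ∑' k : ℕ,
          Set.indicator {k : ℕ | (k : ℝ≥0∞) < τ r ω}
            (fun k => ENNReal.ofReal (Φ r k ω)) k).toReal)
      atTop (nhds ((2 * δ)⁻¹ * x ^ 2)) := by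
  classical
  set m2 : ℝ := ∫ ω, (D 1 ω) ^ 2 with hm2def
  have hm2nn : 0 ≤ m2 := integral_nonneg fun ω => sq_nonneg _
  set sig2 : ℝ := m2 - δ ^ 2 with hsig2def
  have hsig_nn : 0 ≤ sig2 := by
    rw [hsig2def, hm2def, ← RRWProof.integral_Dpδ_sq hDint hDsq hmean]
    exact integral_nonneg fun ω => sq_nonneg _
  have hx2 : (0:ℝ) < x ^ 2 := by positivity
  have htgt : (2 * δ)⁻¹ * x ^ 2 = x ^ 2 / (2 * δ) := by rw [inv_mul_eq_div]
  rw [Metric.tendsto_atTop]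
  intro ε hε
  -- parameter choices
  set η : ℝ := min 1 (ε * δ / x ^ 2) with hηdef
  have hη0 : 0 < η := lt_min one_pos (div_pos (mul_pos hε hδ) hx2)
  have hη1 : η ≤ 1 := min_le_left _ _
  have hηε : η ≤ ε * δ / x ^ 2 := min_le_right _ _
  set θ : ℝ := 1 - η with hθdef
  have hθ0 : 0 ≤ θ := by simp only [hθdef]; linarith
  have hθ1 : θ < 1 := by simp only [hθdef]; linarith
  have h1θ : 1 - θ = η := by simp only [hθdef]; ring
  set K : ℝ := (sig2 * θ / (δ * (1 - θ) ^ 2) + (1 + sig2 / δ)) / 2 with hKdef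
  have hK0 : 0 ≤ K := by
    rw [hKdef, h1θ]
    have h1 : 0 ≤ sig2 * θ / (δ * η ^ 2) :=
      div_nonneg (mul_nonneg hsig_nn hθ0) (mul_nonneg (le_of_lt hδ) (sq_nonneg η))
    have h2 : 0 ≤ sig2 / δ := div_nonneg hsig_nn (le_of_lt hδ)
    linarith
  set c1 : ℝ := 4 / (3 * δ) with hc1def
  have hc10 : 0 < c1 := by positivity
  set CU : ℝ := x ^ 2 * m2 * c1 * (1 + m2 / δ) / (2 * δ) with hCUdef
  have hCU0 : 0 ≤ CU := by
    rw [hCUdef]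
    have h1 : 0 ≤ 1 + m2 / δ := by
      have h0 : 0 ≤ m2 / δ := div_nonneg hm2nn (le_of_lt hδ)
      linarith
    have h2 : 0 ≤ x ^ 2 * m2 * c1 :=
      mul_nonneg (mul_nonneg (le_of_lt hx2) hm2nn) (le_of_lt hc10)
    exact div_nonneg (mul_nonneg h2 h1) (by linarith)
  set CL : ℝ := x ^ 2 * K * (1 / δ + 1) with hCLdef
  have hCL0 : 0 ≤ CL := by
    rw [hCLdef]
    have h1 : 0 ≤ 1 / δ + 1 := by
      have : 0 ≤ 1 / δ := by positivity
      linarith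
    exact mul_nonneg (mul_nonneg (le_of_lt hx2) hK0) h1
  set A0 : ℝ := max 1 (max (2 * CU / ε + 1) ((4 * CL / ε + 1) ^ 2)) with hA0def
  have hA01 : 1 ≤ A0 := le_max_left _ _
  refine ⟨A0 / x, fun r hr => ?_⟩
  have hr0 : 0 < r := lt_of_lt_of_le (by positivity) hr
  have haA : A0 ≤ r * x := by
    have := mul_le_mul_of_nonneg_right hr (le_of_lt hx)
    rwa [div_mul_cancel₀ _ (ne_of_gt hx)] at this
  set a : ℝ := r * x with hadef
  have ha1 : 1 ≤ a := le_trans hA01 haA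
  have ha0 : 0 < a := lt_of_lt_of_le one_pos ha1
  set s : ℝ := Real.sqrt a with hsdef
  have hs0 : 0 < s := Real.sqrt_pos.mpr ha0
  have hsa : s * s = a := Real.mul_self_sqrt (le_of_lt ha0)
  have hs1 : 1 ≤ s := by
    rw [hsdef, show (1:ℝ) = Real.sqrt 1 from (Real.sqrt_one).symm]
    exact Real.sqrt_le_sqrt ha1
  -- identify the lintegral
  have hI := RRWProof.lintegral_eq_tsum (x := x) (Φ := Φ) (τ := τ) hiid hDmeas hident hDsq
    hΦ0 hΦstep hτ (r := r) ha0
  simp only [hI]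
  set T : ℝ := (∑' k : ℕ, ENNReal.ofReal (RRWProof.eAlv D (r * x) 0 (Set.Ioi 0) k)).toReal
    with hTdef
  have hub := RRWProof.J_toReal_le (a := r * x) hiid hDmeas hident hDint hDsq hδ hmean ha0
  have hlb := RRWProof.J_toReal_ge (a := r * x) hiid hDmeas hident hDint hDsq hδ hmean
    ha1 hθ0 hθ1
  rw [← hTdef] at hub hlb
  rw [← hm2def] at hub hlb
  rw [← hsig2def, ← hKdef, ← hsdef] at hlb
  rw [← hc1def] at hub
  rw [← hadef] at hub hlb
  have hT0 : 0 ≤ T := ENNReal.toReal_nonneg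
  have hxne : x ≠ 0 := ne_of_gt hx
  have hrne : r ≠ 0 := ne_of_gt hr0
  have hane : a ≠ 0 := ne_of_gt ha0
  have hδne : δ ≠ 0 := ne_of_gt hδ
  have hsne : s ≠ 0 := ne_of_gt hs0
  have hrinv : (r ^ 2)⁻¹ = x ^ 2 / a ^ 2 := by
    rw [hadef]
    field_simp
  -- upper bound
  have hvub : (r ^ 2)⁻¹ * T ≤ x ^ 2 / (2 * δ) + CU / a := by
    rw [hrinv]
    have h1 : x ^ 2 / a ^ 2 * T ≤ x ^ 2 / a ^ 2 * ((a ^ 2 + m2 * (c1 * (a + m2 / δ))) / (2 * δ)) :=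
      mul_le_mul_of_nonneg_left hub (by positivity)
    refine h1.trans ?_
    have hsplit : x ^ 2 / a ^ 2 * ((a ^ 2 + m2 * (c1 * (a + m2 / δ))) / (2 * δ))
        = x ^ 2 / (2 * δ) + x ^ 2 * m2 * c1 * (a + m2 / δ) / (2 * δ * a ^ 2) := by
      field_simp
    rw [hsplit]
    have h2 : x ^ 2 * m2 * c1 * (a + m2 / δ) / (2 * δ * a ^ 2) ≤ CU / a := by
      set X := x ^ 2 * m2 * c1 with hXdef
      have hX : 0 ≤ X := mul_nonneg (mul_nonneg (le_of_lt hx2) hm2nn) (le_of_lt hc10)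
      set q := m2 / δ with hqdef
      have hq : 0 ≤ q := div_nonneg hm2nn (le_of_lt hδ)
      have hden : (0:ℝ) < 2 * δ * a ^ 2 :=
        mul_pos (mul_pos (by norm_num : (0:ℝ) < 2) hδ) (pow_pos ha0 2)
      have hnum : X * (a + q) ≤ X * ((1 + q) * a) :=
        mul_le_mul_of_nonneg_left (arith_A ha1 hq) hX
      calc X * (a + q) / (2 * δ * a ^ 2) ≤ X * ((1 + q) * a) / (2 * δ * a ^ 2) :=
            (div_le_div_iff_of_pos_right hden).mpr hnum
      _ = X * (1 + q) / (2 * δ) / a := by field_simp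
      _ = CU / a := by rw [hCUdef]
    linarith
  -- lower bound
  have hvlb : θ * (1 - θ / 2) * x ^ 2 / δ - CL / s ≤ (r ^ 2)⁻¹ * T := by
    rw [hrinv]
    have h1 : x ^ 2 / a ^ 2 * (θ * (1 - θ / 2) * a ^ 2 / δ - (θ * a / δ + 1) * K * s)
        ≤ x ^ 2 / a ^ 2 * T := mul_le_mul_of_nonneg_left hlb (by positivity)
    refine le_trans ?_ h1
    have hsplit : x ^ 2 / a ^ 2 * (θ * (1 - θ / 2) * a ^ 2 / δ - (θ * a / δ + 1) * K * s)
        = θ * (1 - θ / 2) * x ^ 2 / δ - x ^ 2 * K * (θ * a / δ + 1) * s / a ^ 2 := by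
      field_simp
    rw [hsplit]
    have h2 : x ^ 2 * K * (θ * a / δ + 1) * s / a ^ 2 ≤ CL / s := by
      set Y := x ^ 2 * K with hYdef
      have hY : 0 ≤ Y := mul_nonneg (le_of_lt hx2) hK0
      have ht1 : θ * a / δ + 1 ≤ (1 / δ + 1) * a := by
        have hθaa : θ * a ≤ a := arith_B hθ1 hθ0 ha0
        have h3 : θ * a / δ ≤ a / δ := (div_le_div_iff_of_pos_right hδ).mpr hθaa
        have h4 : (1 / δ + 1) * a = a / δ + a := by ring
        rw [h4]
        linarith
      have hden : (0:ℝ) < a ^ 2 := pow_pos ha0 2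
      have hnum : Y * (θ * a / δ + 1) * s ≤ Y * ((1 / δ + 1) * a) * s :=
        mul_le_mul_of_nonneg_right (mul_le_mul_of_nonneg_left ht1 hY) (le_of_lt hs0)
      calc Y * (θ * a / δ + 1) * s / a ^ 2 ≤ Y * ((1 / δ + 1) * a) * s / a ^ 2 :=
            (div_le_div_iff_of_pos_right hden).mpr hnum
      _ = CL / s := by
          rw [hCLdef, ← hsa]
          field_simp
    linarith
  -- θ-term is close to the limit
  have hθclose : x ^ 2 / (2 * δ) - ε / 2 ≤ θ * (1 - θ / 2) * x ^ 2 / δ := by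
    have h1 : 1 / 2 - θ * (1 - θ / 2) = η ^ 2 / 2 := by rw [hθdef]; ring
    have h2 : x ^ 2 * η ≤ ε * δ := by
      calc x ^ 2 * η ≤ x ^ 2 * (ε * δ / x ^ 2) :=
            mul_le_mul_of_nonneg_left hηε (le_of_lt hx2)
      _ = ε * δ := by field_simp
    have h3 : x ^ 2 * η ^ 2 ≤ ε * δ := arith_C h2 hη1 hη0 hx2
    have h5 : x ^ 2 / (2 * δ) - θ * (1 - θ / 2) * x ^ 2 / δ = x ^ 2 * η ^ 2 / (2 * δ) := by
      field_simp
      linear_combination (x ^ 2 * 2) * h1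
    have h6 : x ^ 2 * η ^ 2 / (2 * δ) ≤ ε / 2 := arith_D h3 hδ hx2
    linarith
  -- tail terms are small
  have hCUsmall : CU / a ≤ ε / 2 := by
    have haB : 2 * CU / ε + 1 ≤ a :=
      le_trans (le_trans (le_max_left _ _) (le_max_right _ _)) haA
    rw [div_le_iff₀ ha0]
    exact arith_E hCU0 hε haB
  have hCLsmall : CL / s ≤ ε / 4 := by
    have haB : (4 * CL / ε + 1) ^ 2 ≤ a := le_trans (le_trans (le_max_right _ _) (le_max_right _ _)) haA
    have hsB : 4 * CL / ε + 1 ≤ s := by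
      have h1 : Real.sqrt ((4 * CL / ε + 1) ^ 2) ≤ s := Real.sqrt_le_sqrt haB
      rwa [Real.sqrt_sq (by positivity)] at h1
    rw [div_le_iff₀ hs0]
    exact arith_F hCL0 hε hsB
  -- combine
  rw [Real.dist_eq, htgt, abs_sub_lt_iff]
  constructor
  · linarith
  · linarith
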